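/- Let ℒ be a finite family of linear subspaces of a finite-dimensional real inner product space V, closed under sum, and let ρ : ℒ → ℤ satisfy χ(⋃_{L∈ℒ} L^⊥) = ∑_{L∈ℒ} ρ(L) χ(L^⊥) as functions on V. Then for any two subspaces L₀ ⊊ L₁ in ℒ, the sum ∑_{L∈ℒ, L+L₀ = L₁} ρ(L) equals 0. -/

import Mathlib

open scoped Classical

/-- A generic point of a subspace `W`: a point of `W` lying in no subspace from a
finite family except those containing `W`. -/
lemma exists_generic_point {V : Type*} [NormedAddCommGroup V] [InnerProductSpace ℝ V]
    (W : Submodule ℝ V) (S : Finset (Submodule ℝ V)) :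
    ∃ x ∈ W, ∀ p ∈ S, x ∈ p → W ≤ p := by
  classical
  set T : Finset (Submodule ℝ W) :=
    (S.filter (fun p => ¬ W ≤ p)).image (fun p => p.comap W.subtype) with hT
  have htop : ⊤ ∉ T := by
    simp only [hT, Finset.mem_image, Finset.mem_filter]
    rintro ⟨p, ⟨hp, hnle⟩, heq⟩
    apply hnle
    intro w hw
    have : (⟨w, hw⟩ : W) ∈ Submodule.comap W.subtype p := by
      rw [heq]; trivial
    exact this
  have hne := Subspace.biUnion_ne_univ_of_top_notMem (E := W) htop
  rw [Set.ne_univ_iff_exists_notMem] at hne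
  obtain ⟨y, hy⟩ := hne
  refine ⟨y.1, y.2, ?_⟩
  intro p hp hyp
  by_contra hnle
  apply hy
  simp only [Set.mem_iUnion, SetLike.mem_coe]
  exact ⟨_, Finset.mem_image.mpr ⟨p, Finset.mem_filter.mpr ⟨hp, hnle⟩, rfl⟩, hyp⟩

theorem patchwork_sum_subspaces_sum_eq_zero
    {V : Type*} [NormedAddCommGroup V] [InnerProductSpace ℝ V]
    [FiniteDimensional ℝ V]
    (ℒ : Finset (Submodule ℝ V))
    (hsum : ∀ L ∈ ℒ, ∀ L' ∈ ℒ, L ⊔ L' ∈ ℒ)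
    (ρ : Submodule ℝ V → ℤ)
    (hρ : ∀ x : V,
      Set.indicator (⋃ L ∈ ℒ, ((Lᗮ : Submodule ℝ V) : Set V)) (fun _ => (1 : ℝ)) x =
        ∑ L ∈ ℒ, (ρ L : ℝ) *
          Set.indicator ((Lᗮ : Submodule ℝ V) : Set V) (fun _ => (1 : ℝ)) x)
    (L₀ L₁ : Submodule ℝ V) (hL₀ : L₀ ∈ ℒ) (hL₁ : L₁ ∈ ℒ) (hlt : L₀ < L₁) :
    ∑ L ∈ ℒ.filter (fun L => L ⊔ L₀ = L₁), ρ L = 0 := by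
  classical
  -- Step 1: for every M ∈ ℒ with L₀ ≤ M, evaluate at a generic point of Mᗮ.
  have key : ∀ M ∈ ℒ, L₀ ≤ M → ∑ L ∈ ℒ.filter (fun L => L ≤ M), ρ L = 1 := by
    intro M hM hle
    obtain ⟨x, hxW, hxgen⟩ := exists_generic_point Mᗮ (ℒ.image (fun L => Lᗮ))
    have hmem : ∀ L ∈ ℒ, (x ∈ Lᗮ ↔ L ≤ M) := by
      intro L hL
      constructor
      · intro hx
        have h1 : Mᗮ ≤ Lᗮ :=
          hxgen Lᗮ (Finset.mem_image.mpr ⟨L, hL, rfl⟩) hx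
        have h2 : Lᗮᗮ ≤ Mᗮᗮ := Submodule.orthogonal_le h1
        rwa [Submodule.orthogonal_orthogonal, Submodule.orthogonal_orthogonal] at h2
      · intro h
        exact Submodule.orthogonal_le h hxW
    have hx0 : x ∈ (⋃ L ∈ ℒ, ((Lᗮ : Submodule ℝ V) : Set V)) :=
      Set.mem_biUnion hM hxW
    have heq := hρ x
    rw [Set.indicator_of_mem hx0] at heq
    have hrhs : ∑ L ∈ ℒ, (ρ L : ℝ) *
        Set.indicator ((Lᗮ : Submodule ℝ V) : Set V) (fun _ => (1 : ℝ)) x =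
        ((∑ L ∈ ℒ.filter (fun L => L ≤ M), ρ L : ℤ) : ℝ) := by
      push_cast
      rw [Finset.sum_filter]
      refine Finset.sum_congr rfl ?_
      intro L hL
      by_cases h : L ≤ M
      · rw [if_pos h, Set.indicator_of_mem ((hmem L hL).mpr h), mul_one]
      · rw [if_neg h, Set.indicator_of_notMem (fun hx => h ((hmem L hL).mp hx)), mul_zero]
    rw [hrhs] at heq
    exact_mod_cast heq.symm
  -- Step 2: fiberwise decomposition.
  set f : Submodule ℝ V → ℤ := fun N => ∑ L ∈ ℒ.filter (fun L => L ⊔ L₀ = N), ρ L with hf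
  set ℒ' : Finset (Submodule ℝ V) := ℒ.filter (fun N => L₀ ≤ N) with hℒ'
  have key2 : ∀ M ∈ ℒ', ∑ N ∈ ℒ'.filter (fun N => N ≤ M), f N = 1 := by
    intro M hM
    rw [hℒ', Finset.mem_filter] at hM
    obtain ⟨hMℒ, hML₀⟩ := hM
    rw [← key M hMℒ hML₀]
    rw [← Finset.sum_fiberwise_of_maps_to (g := fun L => L ⊔ L₀)
      (t := ℒ'.filter (fun N => N ≤ M)) ?_ ρ]
    · refine Finset.sum_congr rfl ?_
      intro N hN
      rw [Finset.mem_filter, hℒ', Finset.mem_filter] at hN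
      refine Finset.sum_congr ?_ (fun _ _ => rfl)
      ext L
      simp only [Finset.mem_filter]
      constructor
      · rintro ⟨hL, h2⟩
        exact ⟨⟨hL, le_trans (le_trans le_sup_left h2.le) hN.2⟩, h2⟩
      · rintro ⟨⟨hL, _⟩, h2⟩; exact ⟨hL, h2⟩
    · intro L hL
      rw [Finset.mem_filter] at hL
      rw [Finset.mem_filter, hℒ', Finset.mem_filter]
      exact ⟨⟨hsum L hL.1 L₀ hL₀, le_sup_right⟩, sup_le hL.2 hML₀⟩
  have hL₀' : L₀ ∈ ℒ' := Finset.mem_filter.mpr ⟨hL₀, le_refl _⟩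
  have fL₀ : f L₀ = 1 := by
    have := key2 L₀ hL₀'
    have hset : ℒ'.filter (fun N => N ≤ L₀) = {L₀} := by
      ext N
      simp only [Finset.mem_filter, Finset.mem_singleton, hℒ']
      constructor
      · rintro ⟨⟨_, h1⟩, h2⟩; exact le_antisymm h2 h1
      · rintro rfl; exact ⟨⟨hL₀, le_refl _⟩, le_refl _⟩
    rw [hset, Finset.sum_singleton] at this
    exact this
  -- Step 3: induction on rank.
  have main : ∀ n : ℕ, ∀ M ∈ ℒ', Module.finrank ℝ M ≤ n → M ≠ L₀ → f M = 0 := by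
    intro n
    induction n using Nat.strong_induction_on with
    | _ n ih =>
      intro M hM hrank hne
      have hMle : L₀ ≤ M := (Finset.mem_filter.mp hM).2
      have h1 := key2 M hM
      have hsplit : ∀ N ∈ ℒ'.filter (fun N => N ≤ M),
          f N = (if N = L₀ then (1 : ℤ) else 0) + (if N = M then f M else 0) := by
        intro N hN
        rw [Finset.mem_filter] at hN
        by_cases h₀ : N = L₀
        · subst h₀
          rw [if_pos rfl, if_neg (fun h => hne h.symm), fL₀, add_zero]
        · rw [if_neg h₀]
          by_cases h₁ : N = M
          · subst h₁; rw [if_pos rfl, zero_add]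
          · rw [if_neg h₁, add_zero]
            have hNlt : N < M := lt_of_le_of_ne hN.2 h₁
            have hr : Module.finrank ℝ N < Module.finrank ℝ M :=
              Submodule.finrank_lt_finrank_of_lt hNlt
            rcases Nat.lt_or_ge 0 n with hn | hn
            · exact ih (Module.finrank ℝ N) (lt_of_lt_of_le hr hrank) N hN.1 le_rfl h₀
            · omega
      rw [Finset.sum_congr rfl hsplit, Finset.sum_add_distrib,
        Finset.sum_ite_eq' _ L₀ (fun _ => (1 : ℤ)),
        Finset.sum_ite_eq' _ M (fun _ => f M)] at h1
      have hm1 : L₀ ∈ ℒ'.filter (fun N => N ≤ M) := Finset.mem_filter.mpr ⟨hL₀', hMle⟩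
      have hm2 : M ∈ ℒ'.filter (fun N => N ≤ M) := Finset.mem_filter.mpr ⟨hM, le_refl _⟩
      rw [if_pos hm1, if_pos hm2] at h1
      omega
  have hL₁' : L₁ ∈ ℒ' := Finset.mem_filter.mpr ⟨hL₁, hlt.le⟩
  exact main (Module.finrank ℝ L₁) L₁ hL₁' le_rfl (fun h => hlt.ne' h)
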